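/- Consider a single item with horizon distribution H of mean μ and i.i.d. buyer valuations from V. Let p satisfy P_{X~V}[X ≥ p] = 1/μ. Then the optimal (prophet) expected welfare is at most E_{X~V}[X | X ≥ p], i.e., the solution of the LP maximizing Σ_v y(v)·v subject to Σ_v y(v) ≤ 1 and y(v) ≤ μ·P[X = v] for all v equals E[X | X ≥ p]. -/

import Mathlib

/-- LP upper bound for the prophet with a single item: for a discrete valuation
distribution with values `a i` and probabilities `w i`, and `p` with P[X ≥ p] = 1/μ,
the LP maximizing ∑ y(v)·v subject to ∑ y(v) ≤ 1 and y(v) ≤ μ·P[X = v] has optimal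
value E[X | X ≥ p] = μ · ∑_{a i ≥ p} w i · a i. -/
theorem prophet_lp_value (a w : ℕ → ℝ) (ha : ∀ i, 0 ≤ a i) (hw : ∀ i, 0 ≤ w i)
    (hw1 : ∑' i, w i = 1) (hsa : Summable (fun i => w i * a i))
    (μ p : ℝ) (hμ : 1 ≤ μ)
    (hp : ∑' i, (if p ≤ a i then w i else 0) = 1 / μ) :
    IsGreatest {S : ℝ | ∃ y : ℕ → ℝ, (∀ i, 0 ≤ y i) ∧ (∀ i, y i ≤ μ * w i) ∧
        (∑' i, y i) ≤ 1 ∧ S = ∑' i, y i * a i}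
      (μ * ∑' i, (if p ≤ a i then w i * a i else 0)) := by
  have hμ0 : (0:ℝ) < μ := lt_of_lt_of_le one_pos hμ
  have hwsum : Summable w := by
    by_contra h
    rw [tsum_eq_zero_of_not_summable h] at hw1
    norm_num at hw1
  have hindA : Summable (fun i => if p ≤ a i then w i * a i else 0) := by
    apply hsa.of_nonneg_of_le
    · intro i; split <;> [exact mul_nonneg (hw i) (ha i); exact le_refl 0]
    · intro i; split <;> [exact le_refl _; exact mul_nonneg (hw i) (ha i)]
  have hindW : Summable (fun i => if p ≤ a i then w i else 0) := by
    apply hwsum.of_nonneg_of_le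
    · intro i; split <;> [exact hw i; exact le_refl 0]
    · intro i; split <;> [exact le_refl _; exact hw i]
  constructor
  · refine ⟨fun i => if p ≤ a i then μ * w i else 0, ?_, ?_, ?_, ?_⟩
    · intro i; dsimp only; split
      · exact mul_nonneg hμ0.le (hw i)
      · exact le_refl 0
    · intro i; dsimp only; split
      · exact le_refl _
      · exact mul_nonneg hμ0.le (hw i)
    · have h1 : (∑' i, if p ≤ a i then μ * w i else 0)
          = μ * ∑' i, (if p ≤ a i then w i else 0) := by
        rw [← tsum_mul_left]
        congr 1; funext i; split <;> simp
      rw [h1, hp]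
      field_simp
      exact le_refl 1
    · rw [← tsum_mul_left]
      congr 1; funext i; by_cases h : p ≤ a i <;> simp [h, mul_assoc]
  · rintro S ⟨y, hy0, hyw, hysum1, rfl⟩
    have hysummable : Summable y :=
      (hwsum.mul_left μ).of_nonneg_of_le hy0 hyw
    have hyasum : Summable (fun i => y i * a i) := by
      apply ((hsa.mul_left μ)).of_nonneg_of_le
      · intro i; exact mul_nonneg (hy0 i) (ha i)
      · intro i
        calc y i * a i ≤ (μ * w i) * a i :=
              mul_le_mul_of_nonneg_right (hyw i) (ha i)
          _ = μ * (w i * a i) := by ring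
    by_cases hp0 : p ≤ 0
    · -- all indicators are true
      have hall : ∀ i, p ≤ a i := fun i => hp0.trans (ha i)
      have hT : (∑' i, (if p ≤ a i then w i * a i else 0)) = ∑' i, w i * a i := by
        congr 1; funext i; rw [if_pos (hall i)]
      rw [hT, ← tsum_mul_left]
      apply Summable.tsum_le_tsum _ hyasum (hsa.mul_left μ)
      intro i
      calc y i * a i ≤ (μ * w i) * a i :=
            mul_le_mul_of_nonneg_right (hyw i) (ha i)
        _ = μ * (w i * a i) := by ring
    · push_neg at hp0
      set g : ℕ → ℝ := fun i => if p ≤ a i then μ * (w i * (a i - p)) else 0 with hg_def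
      have hg_eq : ∀ i, g i = μ * ((if p ≤ a i then w i * a i else 0)
          - p * (if p ≤ a i then w i else 0)) := by
        intro i; simp only [hg_def]; split <;> ring
      have hgsum : Summable g := by
        have : Summable (fun i => μ * ((if p ≤ a i then w i * a i else 0)
            - p * (if p ≤ a i then w i else 0))) :=
          ((hindA.sub (hindW.mul_left p)).mul_left μ)
        exact this.congr (fun i => (hg_eq i).symm)
      have hgtsum : ∑' i, g i
          = μ * (∑' i, (if p ≤ a i then w i * a i else 0)) - p := by
        calc ∑' i, g i
            = ∑' i, μ * ((if p ≤ a i then w i * a i else 0)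
                - p * (if p ≤ a i then w i else 0)) :=
              tsum_congr hg_eq
          _ = μ * ((∑' i, (if p ≤ a i then w i * a i else 0))
                - p * (∑' i, (if p ≤ a i then w i else 0))) := by
              rw [tsum_mul_left, Summable.tsum_sub hindA (hindW.mul_left p), tsum_mul_left]
          _ = μ * (∑' i, (if p ≤ a i then w i * a i else 0)) - p := by
              rw [hp]; field_simp
      have key : ∀ i, y i * a i ≤ g i + p * y i := by
        intro i
        simp only [hg_def]
        split
        · rename_i h
          have h1 : y i * (a i - p) ≤ (μ * w i) * (a i - p) :=
            mul_le_mul_of_nonneg_right (hyw i) (by linarith)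
          nlinarith
        · rename_i h
          push_neg at h
          have : y i * a i ≤ y i * p :=
            mul_le_mul_of_nonneg_left h.le (hy0 i)
          linarith
      calc ∑' i, y i * a i ≤ ∑' i, (g i + p * y i) :=
            Summable.tsum_le_tsum key hyasum (hgsum.add (hysummable.mul_left p))
        _ = (∑' i, g i) + p * (∑' i, y i) := by
            rw [Summable.tsum_add hgsum (hysummable.mul_left p), tsum_mul_left]
        _ ≤ (μ * (∑' i, (if p ≤ a i then w i * a i else 0)) - p) + p * 1 := by
            rw [hgtsum]
            have : p * (∑' i, y i) ≤ p * 1 :=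
              mul_le_mul_of_nonneg_left hysum1 hp0.le
            linarith
        _ = μ * (∑' i, (if p ≤ a i then w i * a i else 0)) := by ring
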